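/- For every n ≥ 2, the group Out(F_n) contains a subgroup isomorphic to the semidirect product F_2 ⋉ F_2^{2(n−2)}, namely the image under the quotient map Aut(F_n) → Out(F_n) of the group of automorphisms Φ with Φ(x_1)=α(x_1), Φ(x_2)=α(x_2), Φ(x_j)= l_j x_j r_j^{-1} for j ≥ 3, where α ranges over a rank-2 free subgroup U ≤ Aut(F(x_1,x_2)) mapping isomorphically to a free subgroup of Out(F_2), and l_j, r_j range over F(x_1,x_2). -/

import Mathlib

/-- The subgroup of inner automorphisms is normal in `MulAut G`. -/
instance conjRangeNormal (G : Type) [Group G] :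
    ((MulAut.conj : G →* MulAut G).range).Normal := by
  constructor
  rintro - ⟨g, rfl⟩ φ
  refine ⟨φ g, ?_⟩
  ext x
  simp [MulAut.conj, mul_assoc]

/-- The outer automorphism group `Out(G) = Aut(G)/Inn(G)`. -/
def Out (G : Type) [Group G] : Type :=
  MulAut G ⧸ (MulAut.conj : G →* MulAut G).range

instance (G : Type) [Group G] : Group (Out G) :=
  QuotientGroup.Quotient.group _




namespace Stmt6Proof
open Pointwise

abbrev F2 := FreeGroup (Fin 2)
abbrev Ab2 := Abelianization F2

/-- abelianization functor on automorphisms -/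
def abAut {G : Type} [Group G] : MulAut G →* MulAut (Abelianization G) where
  toFun e := MonoidHom.toMulEquiv (Abelianization.map e.toMonoidHom)
      (Abelianization.map e.symm.toMonoidHom)
      (by apply Abelianization.hom_ext; ext x; simp)
      (by apply Abelianization.hom_ext; ext x; simp)
  map_one' := by
    apply MulEquiv.toMonoidHom_injective
    apply Abelianization.hom_ext; ext x; simp
  map_mul' e f := by
    apply MulEquiv.toMonoidHom_injective
    apply Abelianization.hom_ext; ext x
    simp [MulAut.mul_apply]

@[simp] lemma abAut_apply_of {G : Type} [Group G] (e : MulAut G) (x : G) :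
    abAut e (Abelianization.of x) = Abelianization.of (e x) := by
  simp [abAut]

@[simp] lemma abAut_inv_apply_of {G : Type} [Group G] (e : MulAut G) (x : G) :
    (abAut e)⁻¹ (Abelianization.of x) = Abelianization.of (e⁻¹ x) := by
  rw [← map_inv]; exact abAut_apply_of _ _

lemma abAut_conj {G : Type} [Group G] (g : G) : abAut (MulAut.conj g) = 1 := by
  apply MulEquiv.toMonoidHom_injective
  apply Abelianization.hom_ext; ext x
  simp [mul_comm, mul_assoc]

lemma aut_apply_inv_apply {M : Type} [Group M] (f : MulAut M) (v : M) : f (f⁻¹ v) = v := by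
  rw [← MulAut.mul_apply, mul_inv_cancel, MulAut.one_apply]

lemma aut_inv_apply_apply {M : Type} [Group M] (f : MulAut M) (v : M) : f⁻¹ (f v) = v := by
  rw [← MulAut.mul_apply, inv_mul_cancel, MulAut.one_apply]

/-- the automorphism x0 ↦ x0, x1 ↦ x1 x0 x0 -/
def aF : MulAut F2 :=
  MonoidHom.toMulEquiv
    (FreeGroup.lift ![.of 0, .of 1 * .of 0 * .of 0])
    (FreeGroup.lift ![.of 0, .of 1 * (.of 0)⁻¹ * (.of 0)⁻¹])
    (by apply FreeGroup.ext_hom; intro i; fin_cases i <;> simp [mul_assoc])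
    (by apply FreeGroup.ext_hom; intro i; fin_cases i <;> simp [mul_assoc])

/-- the automorphism x0 ↦ x0 x1 x1, x1 ↦ x1 -/
def bF : MulAut F2 :=
  MonoidHom.toMulEquiv
    (FreeGroup.lift ![.of 0 * .of 1 * .of 1, .of 1])
    (FreeGroup.lift ![.of 0 * (.of 1)⁻¹ * (.of 1)⁻¹, .of 1])
    (by apply FreeGroup.ext_hom; intro i; fin_cases i <;> simp [mul_assoc])
    (by apply FreeGroup.ext_hom; intro i; fin_cases i <;> simp [mul_assoc])

@[simp] lemma aF_apply (x : F2) : aF x = FreeGroup.lift ![.of 0, .of 1 * .of 0 * .of 0] x := rfl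
@[simp] lemma bF_apply (x : F2) : bF x = FreeGroup.lift ![.of 0 * .of 1 * .of 1, .of 1] x := rfl
@[simp] lemma aFi_apply (x : F2) :
    (aF⁻¹ : MulAut F2) x = FreeGroup.lift ![.of 0, .of 1 * (.of 0)⁻¹ * (.of 0)⁻¹] x := rfl
@[simp] lemma bFi_apply (x : F2) :
    (bF⁻¹ : MulAut F2) x = FreeGroup.lift ![.of 0 * (.of 1)⁻¹ * (.of 1)⁻¹, .of 1] x := rfl
@[simp] lemma aFs_apply (x : F2) :
    aF.symm x = FreeGroup.lift ![.of 0, .of 1 * (.of 0)⁻¹ * (.of 0)⁻¹] x := rfl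
@[simp] lemma bFs_apply (x : F2) :
    bF.symm x = FreeGroup.lift ![.of 0 * (.of 1)⁻¹ * (.of 1)⁻¹, .of 1] x := rfl
@[simp] lemma abAut_symm_apply_of {G : Type} [Group G] (e : MulAut G) (x : G) :
    (abAut e).symm (Abelianization.of x) = Abelianization.of (e.symm x) := by
  rw [← MulAut.inv_apply, abAut_inv_apply_of, MulAut.inv_apply]

-- coordinates
def c20 : Ab2 →* Multiplicative ℤ :=
  Abelianization.lift (FreeGroup.lift ![Multiplicative.ofAdd 1, 1])
def c21 : Ab2 →* Multiplicative ℤ :=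
  Abelianization.lift (FreeGroup.lift ![1, Multiplicative.ofAdd 1])

def d20 (v : Ab2) : ℤ := Multiplicative.toAdd (c20 v)
def d21 (v : Ab2) : ℤ := Multiplicative.toAdd (c21 v)

def ε2 (j : Fin 2) : Ab2 := Abelianization.of (FreeGroup.of j)

@[simp] lemma d20_e0 : d20 (ε2 0) = 1 := by simp [d20, c20, ε2]
@[simp] lemma d20_e1 : d20 (ε2 1) = 0 := by simp [d20, c20, ε2]
@[simp] lemma d21_e0 : d21 (ε2 0) = 0 := by simp [d21, c21, ε2]
@[simp] lemma d21_e1 : d21 (ε2 1) = 1 := by simp [d21, c21, ε2]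

@[simp] lemma d20_mul (u v : Ab2) : d20 (u * v) = d20 u + d20 v := by simp [d20]
@[simp] lemma d21_mul (u v : Ab2) : d21 (u * v) = d21 u + d21 v := by simp [d21]
@[simp] lemma d20_zpow (u : Ab2) (m : ℤ) : d20 (u ^ m) = m * d20 u := by simp [d20, mul_comm]
@[simp] lemma d21_zpow (u : Ab2) (m : ℤ) : d21 (u ^ m) = m * d21 u := by simp [d21, mul_comm]
@[simp] lemma d20_one : d20 1 = 0 := by simp [d20]
@[simp] lemma d21_one : d21 1 = 0 := by simp [d21]
@[simp] lemma d20_inv (u : Ab2) : d20 u⁻¹ = - d20 u := by simp [d20]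
@[simp] lemma d21_inv (u : Ab2) : d21 u⁻¹ = - d21 u := by simp [d21]

/-- reconstruction: Ab2 is free abelian on ε2 0, ε2 1 -/
lemma recon2 (v : Ab2) : v = ε2 0 ^ (d20 v) * ε2 1 ^ (d21 v) := by
  have : ((zpowersHom Ab2 (ε2 0)).comp c20) * ((zpowersHom Ab2 (ε2 1)).comp c21)
      = MonoidHom.id Ab2 := by
    apply Abelianization.hom_ext; ext j
    fin_cases j <;> simp [c20, c21, ε2]
  have h := DFunLike.congr_fun this v
  simpa [d20, d21] using h.symm

lemma ne_one_coords {v : Ab2} (h : v ≠ 1) : ¬ (d20 v = 0 ∧ d21 v = 0) := by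
  rintro ⟨h0, h1⟩
  exact h (by rw [recon2 v, h0, h1]; simp)

noncomputable def Aab : MulAut Ab2 := abAut aF
noncomputable def Bab : MulAut Ab2 := abAut bF

-- coordinate action lemmas
lemma c2_hom_ext (f g : Ab2 →* Multiplicative ℤ)
    (h0 : f (ε2 0) = g (ε2 0)) (h1 : f (ε2 1) = g (ε2 1)) : f = g := by
  apply Abelianization.hom_ext
  apply FreeGroup.ext_hom
  intro j; fin_cases j <;> assumption

lemma d20_A (v : Ab2) : d20 (Aab v) = d20 v + 2 * d21 v := by
  have h : c20.comp Aab.toMonoidHom = c20 * (c21 * c21) := by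
    apply c2_hom_ext <;> simp [Aab, ε2, c20, c21]
  have := DFunLike.congr_fun h v
  simp only [MonoidHom.coe_comp, Function.comp_apply, MonoidHom.mul_apply, MulEquiv.coe_toMonoidHom] at this
  simp [d20, d21, this]; ring

lemma d21_A (v : Ab2) : d21 (Aab v) = d21 v := by
  have h : c21.comp Aab.toMonoidHom = c21 := by
    apply c2_hom_ext <;> simp [Aab, ε2, c20, c21]
  have := DFunLike.congr_fun h v
  simp only [MonoidHom.coe_comp, Function.comp_apply, MulEquiv.coe_toMonoidHom] at this
  simp [d21, this]

lemma d20_Ai (v : Ab2) : d20 (Aab⁻¹ v) = d20 v - 2 * d21 v := by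
  have h : c20.comp (Aab⁻¹ : MulAut Ab2).toMonoidHom = c20 * (c21 * c21)⁻¹ := by
    apply c2_hom_ext <;> simp [Aab, Bab, ε2, c20, c21]
  have := DFunLike.congr_fun h v
  simp only [MonoidHom.coe_comp, Function.comp_apply, MonoidHom.mul_apply, MonoidHom.inv_apply, MulEquiv.coe_toMonoidHom, MulAut.inv_apply] at this
  simp [d20, d21, this]; ring

lemma d21_Ai (v : Ab2) : d21 (Aab⁻¹ v) = d21 v := by
  have h : c21.comp (Aab⁻¹ : MulAut Ab2).toMonoidHom = c21 := by
    apply c2_hom_ext <;> simp [Aab, Bab, ε2, c20, c21]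
  have := DFunLike.congr_fun h v
  simp only [MonoidHom.coe_comp, Function.comp_apply, MulEquiv.coe_toMonoidHom, MulAut.inv_apply] at this
  simp [d21, this]

lemma d20_B (v : Ab2) : d20 (Bab v) = d20 v := by
  have h : c20.comp Bab.toMonoidHom = c20 := by
    apply c2_hom_ext <;> simp [Bab, ε2, c20, c21]
  have := DFunLike.congr_fun h v
  simp only [MonoidHom.coe_comp, Function.comp_apply, MulEquiv.coe_toMonoidHom] at this
  simp [d20, this]

lemma d21_B (v : Ab2) : d21 (Bab v) = d21 v + 2 * d20 v := by
  have h : c21.comp Bab.toMonoidHom = c21 * (c20 * c20) := by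
    apply c2_hom_ext <;> simp [Bab, ε2, c20, c21]
  have := DFunLike.congr_fun h v
  simp only [MonoidHom.coe_comp, Function.comp_apply, MonoidHom.mul_apply, MulEquiv.coe_toMonoidHom] at this
  simp [d20, d21, this]; ring

lemma d20_Bi (v : Ab2) : d20 (Bab⁻¹ v) = d20 v := by
  have h : c20.comp (Bab⁻¹ : MulAut Ab2).toMonoidHom = c20 := by
    apply c2_hom_ext <;> simp [Aab, Bab, ε2, c20, c21]
  have := DFunLike.congr_fun h v
  simp only [MonoidHom.coe_comp, Function.comp_apply, MulEquiv.coe_toMonoidHom, MulAut.inv_apply] at this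
  simp [d20, this]

lemma d21_Bi (v : Ab2) : d21 (Bab⁻¹ v) = d21 v - 2 * d20 v := by
  have h : c21.comp (Bab⁻¹ : MulAut Ab2).toMonoidHom = c21 * (c20 * c20)⁻¹ := by
    apply c2_hom_ext <;> simp [Aab, Bab, ε2, c20, c21]
  have := DFunLike.congr_fun h v
  simp only [MonoidHom.coe_comp, Function.comp_apply, MonoidHom.mul_apply, MonoidHom.inv_apply, MulEquiv.coe_toMonoidHom, MulAut.inv_apply] at this
  simp [d20, d21, this]; ring

-- ping pong space: non-identity elements of Ab2
def V : Type := {v : Ab2 // v ≠ 1}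

instance : SMul (MulAut Ab2) V :=
  ⟨fun f v => ⟨f v.1, fun h => v.2 (f.injective (by simpa using h))⟩⟩

@[simp] lemma smul_coe (f : MulAut Ab2) (v : V) : (f • v).1 = f v.1 := rfl

instance : MulAction (MulAut Ab2) V where
  one_smul v := Subtype.ext (by simp)
  mul_smul f g v := Subtype.ext (by simp [MulAut.mul_apply])

def XX : Fin 2 → Set V :=
  ![{v | (d21 v.1)^2 ≤ (d20 v.1)^2 ∧ 0 < d20 v.1 * d21 v.1},
    {v | (d20 v.1)^2 < (d21 v.1)^2 ∧ 0 < d20 v.1 * d21 v.1}]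
def YY : Fin 2 → Set V :=
  ![{v | (d21 v.1)^2 < (d20 v.1)^2 ∧ d20 v.1 * d21 v.1 ≤ 0},
    {v | (d20 v.1)^2 ≤ (d21 v.1)^2 ∧ d20 v.1 * d21 v.1 ≤ 0}]

lemma sum_sq_pos {x y : ℤ} (h0 : ¬ (x = 0 ∧ y = 0)) : 0 < x^2 + y^2 := by
  rcases not_and_or.mp h0 with h | h
  · have : 0 < x^2 := by positivity
    nlinarith [sq_nonneg y]
  · have : 0 < y^2 := by positivity
    nlinarith [sq_nonneg x]

lemma arithA {x y : ℤ} (h0 : ¬ (x = 0 ∧ y = 0)) (h : ¬ (y^2 < x^2 ∧ x * y ≤ 0)) :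
    y^2 ≤ (x + 2*y)^2 ∧ 0 < (x + 2*y) * y := by
  rcases not_and_or.mp h with h | h
  · push_neg at h
    have hy : y ≠ 0 := by rintro rfl; exact h0 ⟨by nlinarith [sq_nonneg x], rfl⟩
    have hy2 : 0 < y^2 := by positivity
    constructor
    · nlinarith [sq_nonneg (x + y)]
    · nlinarith [sq_nonneg (x + y)]
  · push_neg at h
    constructor
    · nlinarith [sq_nonneg x, sq_nonneg y]
    · nlinarith [sq_nonneg y]

lemma arithAi {x y : ℤ} (h0 : ¬ (x = 0 ∧ y = 0)) (h : ¬ ((y^2 ≤ x^2) ∧ 0 < x * y)) :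
    y^2 < (x - 2*y)^2 ∧ (x - 2*y) * y ≤ 0 := by
  rcases not_and_or.mp h with h | h
  · push_neg at h
    have hy2 : 0 < y^2 := by nlinarith [sq_nonneg x]
    constructor
    · nlinarith [sq_nonneg (x - y)]
    · nlinarith [sq_nonneg (x - y)]
  · push_neg at h
    have hs : 0 < x^2 + y^2 := sum_sq_pos h0
    constructor
    · nlinarith [sq_nonneg x, sq_nonneg y]
    · nlinarith
lemma arithB {x y : ℤ} (h0 : ¬ (x = 0 ∧ y = 0)) (h : ¬ ((x^2 ≤ y^2) ∧ x * y ≤ 0)) :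
    x^2 < (y + 2*x)^2 ∧ 0 < x * (y + 2*x) := by
  rcases not_and_or.mp h with h | h
  · push_neg at h
    have hx2 : 0 < x^2 := by nlinarith [sq_nonneg y]
    constructor
    · nlinarith [sq_nonneg (x + y)]
    · nlinarith [sq_nonneg (x + y)]
  · push_neg at h
    have hx2 : 0 < x^2 := by
      rcases eq_or_ne x 0 with rfl | hx
      · simp at h
      · positivity
    constructor
    · nlinarith [sq_nonneg y]
    · nlinarith

lemma arithBi {x y : ℤ} (h : ¬ ((x^2 < y^2) ∧ 0 < x * y)) :
    x^2 ≤ (y - 2*x)^2 ∧ x * (y - 2*x) ≤ 0 := by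
  rcases not_and_or.mp h with h | h
  · push_neg at h
    constructor
    · nlinarith [sq_nonneg (x - y)]
    · nlinarith [sq_nonneg (x - y)]
  · push_neg at h
    constructor
    · nlinarith [sq_nonneg x, sq_nonneg y]
    · nlinarith [sq_nonneg x]

@[simp] lemma memXX0 (v : V) : v ∈ XX 0 ↔ (d21 v.1)^2 ≤ (d20 v.1)^2 ∧ 0 < d20 v.1 * d21 v.1 := Iff.rfl
@[simp] lemma memXX1 (v : V) : v ∈ XX 1 ↔ (d20 v.1)^2 < (d21 v.1)^2 ∧ 0 < d20 v.1 * d21 v.1 := Iff.rfl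
@[simp] lemma memYY0 (v : V) : v ∈ YY 0 ↔ (d21 v.1)^2 < (d20 v.1)^2 ∧ d20 v.1 * d21 v.1 ≤ 0 := Iff.rfl
@[simp] lemma memYY1 (v : V) : v ∈ YY 1 ↔ (d20 v.1)^2 ≤ (d21 v.1)^2 ∧ d20 v.1 * d21 v.1 ≤ 0 := Iff.rfl

noncomputable def LAB : F2 →* MulAut Ab2 := FreeGroup.lift ![Aab, Bab]

lemma dXX : Disjoint (XX 0) (XX 1) := by
  rw [Set.disjoint_left]; intro v hv hv'
  rw [memXX0] at hv; rw [memXX1] at hv'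
  linarith [hv.1, hv'.1]

lemma dYY : Disjoint (YY 0) (YY 1) := by
  rw [Set.disjoint_left]; intro v hv hv'
  rw [memYY0] at hv; rw [memYY1] at hv'
  linarith [hv.1, hv'.1]

lemma dXY00 : Disjoint (XX 0) (YY 0) := by
  rw [Set.disjoint_left]; intro v hv hv'
  rw [memXX0] at hv; rw [memYY0] at hv'
  linarith [hv.2, hv'.2]

lemma dXY01 : Disjoint (XX 0) (YY 1) := by
  rw [Set.disjoint_left]; intro v hv hv'
  rw [memXX0] at hv; rw [memYY1] at hv'
  linarith [hv.2, hv'.2]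

lemma dXY10 : Disjoint (XX 1) (YY 0) := by
  rw [Set.disjoint_left]; intro v hv hv'
  rw [memXX1] at hv; rw [memYY0] at hv'
  linarith [hv.2, hv'.2]

lemma dXY11 : Disjoint (XX 1) (YY 1) := by
  rw [Set.disjoint_left]; intro v hv hv'
  rw [memXX1] at hv; rw [memYY1] at hv'
  linarith [hv.2, hv'.2]

lemma LAB_inj : Function.Injective (LAB : F2 →* MulAut Ab2) := by
  apply FreeGroup.injective_lift_of_ping_pong ![Aab, Bab] XX YY
  · intro i
    fin_cases i
    · have hne : (Abelianization.of (FreeGroup.of 0 * FreeGroup.of 1) : Ab2) ≠ 1 := by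
        intro h
        have h2 : d20 (ε2 0 * ε2 1) = 0 := by
          rw [show ε2 0 * ε2 1 = (Abelianization.of (FreeGroup.of 0 * FreeGroup.of 1) : Ab2) from by
            simp [ε2], h]
          simp
        simp at h2
      refine ⟨⟨Abelianization.of (.of 0 * .of 1), hne⟩, ?_⟩
      show _ ∈ XX 0
      show (d21 (ε2 0 * ε2 1))^2 ≤ (d20 (ε2 0 * ε2 1))^2 ∧ 0 < d20 (ε2 0 * ε2 1) * d21 (ε2 0 * ε2 1)
      norm_num
    · have hne : (Abelianization.of (FreeGroup.of 0 * (FreeGroup.of 1 * FreeGroup.of 1)) : Ab2) ≠ 1 := by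
        intro h
        have h2 : d20 (ε2 0 * (ε2 1 * ε2 1)) = 0 := by
          rw [show ε2 0 * (ε2 1 * ε2 1) = (Abelianization.of (FreeGroup.of 0 * (FreeGroup.of 1 * FreeGroup.of 1)) : Ab2) from by
            simp [ε2], h]
          simp
        simp at h2
      refine ⟨⟨Abelianization.of (.of 0 * (.of 1 * .of 1)), hne⟩, ?_⟩
      show _ ∈ XX 1
      show (d20 (ε2 0 * (ε2 1 * ε2 1)))^2 < (d21 (ε2 0 * (ε2 1 * ε2 1)))^2 ∧
        0 < d20 (ε2 0 * (ε2 1 * ε2 1)) * d21 (ε2 0 * (ε2 1 * ε2 1))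
      norm_num
  · intro i j hij
    fin_cases i <;> fin_cases j
    · exact absurd rfl hij
    · exact dXX
    · exact dXX.symm
    · exact absurd rfl hij
  · intro i j hij
    fin_cases i <;> fin_cases j
    · exact absurd rfl hij
    · exact dYY
    · exact dYY.symm
    · exact absurd rfl hij
  · intro i j
    fin_cases i <;> fin_cases j
    · exact dXY00
    · exact dXY01
    · exact dXY10
    · exact dXY11
  · intro i
    fin_cases i
    · show Aab • (YY 0)ᶜ ⊆ XX 0
      rw [Set.smul_set_subset_iff]
      intro v hv
      rw [Set.mem_compl_iff, memYY0] at hv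
      show (Aab • v) ∈ XX 0
      rw [memXX0]
      show (d21 ((Aab • v).1))^2 ≤ (d20 ((Aab • v).1))^2 ∧ 0 < d20 ((Aab • v).1) * d21 ((Aab • v).1)
      rw [smul_coe, d20_A, d21_A]
      exact arithA (ne_one_coords v.2) hv
    · show Bab • (YY 1)ᶜ ⊆ XX 1
      rw [Set.smul_set_subset_iff]
      intro v hv
      rw [Set.mem_compl_iff, memYY1] at hv
      show (Bab • v) ∈ XX 1
      rw [memXX1]
      show (d20 ((Bab • v).1))^2 < (d21 ((Bab • v).1))^2 ∧ 0 < d20 ((Bab • v).1) * d21 ((Bab • v).1)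
      rw [smul_coe, d20_B, d21_B]
      exact arithB (ne_one_coords v.2) hv
  · intro i
    fin_cases i
    · show Aab⁻¹ • (XX 0)ᶜ ⊆ YY 0
      rw [Set.smul_set_subset_iff]
      intro v hv
      rw [Set.mem_compl_iff, memXX0] at hv
      show (Aab⁻¹ • v) ∈ YY 0
      rw [memYY0]
      show (d21 ((Aab⁻¹ • v).1))^2 < (d20 ((Aab⁻¹ • v).1))^2 ∧
        d20 ((Aab⁻¹ • v).1) * d21 ((Aab⁻¹ • v).1) ≤ 0
      rw [smul_coe, d20_Ai, d21_Ai]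
      exact arithAi (ne_one_coords v.2) hv
    · show Bab⁻¹ • (XX 1)ᶜ ⊆ YY 1
      rw [Set.smul_set_subset_iff]
      intro v hv
      rw [Set.mem_compl_iff, memXX1] at hv
      show (Bab⁻¹ • v) ∈ YY 1
      rw [memYY1]
      show (d20 ((Bab⁻¹ • v).1))^2 ≤ (d21 ((Bab⁻¹ • v).1))^2 ∧
        d20 ((Bab⁻¹ • v).1) * d21 ((Bab⁻¹ • v).1) ≤ 0
      rw [smul_coe, d20_Bi, d21_Bi]
      exact arithBi hv

/-! ### The rank-3 detector used to rule out `-I` and prove centerlessness -/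

abbrev F3 := FreeGroup (Fin 3)
abbrev Ab3 := Abelianization F3

/-- x0 ↦ x0, x1 ↦ x1 x0 x0, x2 ↦ x2 x1 -/
def aF3 : MulAut F3 :=
  MonoidHom.toMulEquiv
    (FreeGroup.lift ![.of 0, .of 1 * .of 0 * .of 0, .of 2 * .of 1])
    (FreeGroup.lift ![.of 0, .of 1 * (.of 0)⁻¹ * (.of 0)⁻¹, .of 2 * (.of 0 * .of 0 * (.of 1)⁻¹)])
    (by apply FreeGroup.ext_hom; intro i; fin_cases i <;> simp [mul_assoc])
    (by apply FreeGroup.ext_hom; intro i; fin_cases i <;> simp [mul_assoc])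

/-- x0 ↦ x0 x1 x1, x1 ↦ x1, x2 ↦ x2 x0 -/
def bF3 : MulAut F3 :=
  MonoidHom.toMulEquiv
    (FreeGroup.lift ![.of 0 * .of 1 * .of 1, .of 1, .of 2 * .of 0])
    (FreeGroup.lift ![.of 0 * (.of 1)⁻¹ * (.of 1)⁻¹, .of 1, .of 2 * (.of 1 * .of 1 * (.of 0)⁻¹)])
    (by apply FreeGroup.ext_hom; intro i; fin_cases i <;> simp [mul_assoc])
    (by apply FreeGroup.ext_hom; intro i; fin_cases i <;> simp [mul_assoc])

@[simp] lemma aF3_apply (x : F3) :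
    aF3 x = FreeGroup.lift ![.of 0, .of 1 * .of 0 * .of 0, .of 2 * .of 1] x := rfl
@[simp] lemma bF3_apply (x : F3) :
    bF3 x = FreeGroup.lift ![.of 0 * .of 1 * .of 1, .of 1, .of 2 * .of 0] x := rfl

def c30 : Ab3 →* Multiplicative ℤ :=
  Abelianization.lift (FreeGroup.lift ![Multiplicative.ofAdd 1, 1, 1])
def c31 : Ab3 →* Multiplicative ℤ :=
  Abelianization.lift (FreeGroup.lift ![1, Multiplicative.ofAdd 1, 1])
def c32 : Ab3 →* Multiplicative ℤ :=
  Abelianization.lift (FreeGroup.lift ![1, 1, Multiplicative.ofAdd 1])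

def d30 (v : Ab3) : ℤ := Multiplicative.toAdd (c30 v)
def d31 (v : Ab3) : ℤ := Multiplicative.toAdd (c31 v)
def d32 (v : Ab3) : ℤ := Multiplicative.toAdd (c32 v)

def ε3 (j : Fin 3) : Ab3 := Abelianization.of (FreeGroup.of j)

@[simp] lemma d30_e0 : d30 (ε3 0) = 1 := by simp [d30, c30, ε3]
@[simp] lemma d30_e1 : d30 (ε3 1) = 0 := by simp [d30, c30, ε3]
@[simp] lemma d30_e2 : d30 (ε3 2) = 0 := by simp [d30, c30, ε3]
@[simp] lemma d31_e0 : d31 (ε3 0) = 0 := by simp [d31, c31, ε3]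
@[simp] lemma d31_e1 : d31 (ε3 1) = 1 := by simp [d31, c31, ε3]
@[simp] lemma d31_e2 : d31 (ε3 2) = 0 := by simp [d31, c31, ε3]
@[simp] lemma d32_e0 : d32 (ε3 0) = 0 := by simp [d32, c32, ε3]
@[simp] lemma d32_e1 : d32 (ε3 1) = 0 := by simp [d32, c32, ε3]
@[simp] lemma d32_e2 : d32 (ε3 2) = 1 := by simp [d32, c32, ε3]

@[simp] lemma d30_mul (u v : Ab3) : d30 (u * v) = d30 u + d30 v := by simp [d30]
@[simp] lemma d31_mul (u v : Ab3) : d31 (u * v) = d31 u + d31 v := by simp [d31]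
@[simp] lemma d32_mul (u v : Ab3) : d32 (u * v) = d32 u + d32 v := by simp [d32]
@[simp] lemma d30_zpow (u : Ab3) (m : ℤ) : d30 (u ^ m) = m * d30 u := by simp [d30, mul_comm]
@[simp] lemma d31_zpow (u : Ab3) (m : ℤ) : d31 (u ^ m) = m * d31 u := by simp [d31, mul_comm]
@[simp] lemma d32_zpow (u : Ab3) (m : ℤ) : d32 (u ^ m) = m * d32 u := by simp [d32, mul_comm]
@[simp] lemma d30_one : d30 1 = 0 := by simp [d30]
@[simp] lemma d31_one : d31 1 = 0 := by simp [d31]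
@[simp] lemma d32_one : d32 1 = 0 := by simp [d32]
@[simp] lemma d30_inv (u : Ab3) : d30 u⁻¹ = - d30 u := by simp [d30]
@[simp] lemma d31_inv (u : Ab3) : d31 u⁻¹ = - d31 u := by simp [d31]
@[simp] lemma d32_inv (u : Ab3) : d32 u⁻¹ = - d32 u := by simp [d32]

lemma recon3 (v : Ab3) : v = ε3 0 ^ (d30 v) * ε3 1 ^ (d31 v) * ε3 2 ^ (d32 v) := by
  have : ((zpowersHom Ab3 (ε3 0)).comp c30) * ((zpowersHom Ab3 (ε3 1)).comp c31)
      * ((zpowersHom Ab3 (ε3 2)).comp c32) = MonoidHom.id Ab3 := by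
    apply Abelianization.hom_ext; ext j
    fin_cases j <;> simp [c30, c31, c32, ε3]
  have h := DFunLike.congr_fun this v
  simpa [d30, d31, d32] using h.symm

lemma c3_hom_ext (f g : Ab3 →* Multiplicative ℤ)
    (h0 : f (ε3 0) = g (ε3 0)) (h1 : f (ε3 1) = g (ε3 1)) (h2 : f (ε3 2) = g (ε3 2)) : f = g := by
  apply Abelianization.hom_ext
  apply FreeGroup.ext_hom
  intro j; fin_cases j <;> assumption

noncomputable def A3 : MulAut Ab3 := abAut aF3
noncomputable def B3 : MulAut Ab3 := abAut bF3

lemma d30_A3 (v : Ab3) : d30 (A3 v) = d30 v + 2 * d31 v := by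
  have h : c30.comp A3.toMonoidHom = c30 * (c31 * c31) := by
    apply c3_hom_ext <;> simp [A3, ε3, c30, c31]
  have := DFunLike.congr_fun h v
  simp only [MonoidHom.coe_comp, Function.comp_apply, MonoidHom.mul_apply, MulEquiv.coe_toMonoidHom] at this
  simp [d30, d31, this]; ring

lemma d31_A3 (v : Ab3) : d31 (A3 v) = d31 v + d32 v := by
  have h : c31.comp A3.toMonoidHom = c31 * c32 := by
    apply c3_hom_ext <;> simp [A3, ε3, c31, c32]
  have := DFunLike.congr_fun h v
  simp only [MonoidHom.coe_comp, Function.comp_apply, MonoidHom.mul_apply, MulEquiv.coe_toMonoidHom] at this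
  simp [d31, d32, this]

lemma d32_A3 (v : Ab3) : d32 (A3 v) = d32 v := by
  have h : c32.comp A3.toMonoidHom = c32 := by
    apply c3_hom_ext <;> simp [A3, ε3, c32]
  have := DFunLike.congr_fun h v
  simp only [MonoidHom.coe_comp, Function.comp_apply, MulEquiv.coe_toMonoidHom] at this
  simp [d32, this]

lemma d30_B3 (v : Ab3) : d30 (B3 v) = d30 v + d32 v := by
  have h : c30.comp B3.toMonoidHom = c30 * c32 := by
    apply c3_hom_ext <;> simp [B3, ε3, c30, c32]
  have := DFunLike.congr_fun h v
  simp only [MonoidHom.coe_comp, Function.comp_apply, MonoidHom.mul_apply, MulEquiv.coe_toMonoidHom] at this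
  simp [d30, d32, this]

lemma d31_B3 (v : Ab3) : d31 (B3 v) = d31 v + 2 * d30 v := by
  have h : c31.comp B3.toMonoidHom = c31 * (c30 * c30) := by
    apply c3_hom_ext <;> simp [B3, ε3, c30, c31]
  have := DFunLike.congr_fun h v
  simp only [MonoidHom.coe_comp, Function.comp_apply, MonoidHom.mul_apply, MulEquiv.coe_toMonoidHom] at this
  simp [d30, d31, this]; ring

lemma d32_B3 (v : Ab3) : d32 (B3 v) = d32 v := by
  have h : c32.comp B3.toMonoidHom = c32 := by
    apply c3_hom_ext <;> simp [B3, ε3, c32]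
  have := DFunLike.congr_fun h v
  simp only [MonoidHom.coe_comp, Function.comp_apply, MulEquiv.coe_toMonoidHom] at this
  simp [d32, this]

noncomputable def L3 : F2 →* MulAut Ab3 := FreeGroup.lift ![A3, B3]

@[simp] lemma L3_of0 : L3 (.of 0) = A3 := by simp [L3]
@[simp] lemma L3_of1 : L3 (.of 1) = B3 := by simp [L3]

lemma hK3 : ∀ u : F2, ∀ v, d32 (L3 u v) = d32 v := by
  intro u
  induction u using FreeGroup.induction_on with
  | C1 => simp
  | of x =>
    intro v
    fin_cases x
    · show d32 ((L3 (FreeGroup.of 0)) v) = d32 v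
      rw [L3_of0]; exact d32_A3 v
    · show d32 ((L3 (FreeGroup.of 1)) v) = d32 v
      rw [L3_of1]; exact d32_B3 v
  | inv_of x hx =>
    intro v
    rw [map_inv]
    have := hx ((L3 (FreeGroup.of x))⁻¹ v)
    rw [aut_apply_inv_apply] at this
    exact this.symm
  | mul x y hx hy =>
    intro v
    rw [map_mul]
    rw [MulAut.mul_apply, hx, hy]

/-- the embedding Ab2 → Ab3 -/
noncomputable def ι23 : Ab2 →* Ab3 :=
  Abelianization.map (FreeGroup.lift ![.of 0, .of 1])
noncomputable def r32 : Ab3 →* Ab2 :=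
  Abelianization.map (FreeGroup.lift ![.of 0, .of 1, 1])

@[simp] lemma ι23_e0 : ι23 (ε2 0) = ε3 0 := by simp [ι23, ε2, ε3]
@[simp] lemma ι23_e1 : ι23 (ε2 1) = ε3 1 := by simp [ι23, ε2, ε3]

lemma r32_ι23 : ∀ w, r32 (ι23 w) = w := by
  intro w
  have h : r32.comp ι23 = MonoidHom.id Ab2 := by
    apply Abelianization.hom_ext; apply FreeGroup.ext_hom
    intro j; fin_cases j <;> simp [ι23, r32]
  exact DFunLike.congr_fun h w

lemma ι23_inj : Function.Injective ι23 := Function.LeftInverse.injective r32_ι23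

lemma hQ3 : ∀ u : F2, ∀ w, L3 u (ι23 w) = ι23 (LAB u w) := by
  have hA : ∀ w, A3 (ι23 w) = ι23 (Aab w) := by
    intro w
    have h : A3.toMonoidHom.comp ι23 = ι23.comp Aab.toMonoidHom := by
      apply Abelianization.hom_ext; apply FreeGroup.ext_hom
      intro j; fin_cases j <;>
        simp [A3, Aab, ι23, mul_assoc]
    have := DFunLike.congr_fun h w
    simpa using this
  have hB : ∀ w, B3 (ι23 w) = ι23 (Bab w) := by
    intro w
    have h : B3.toMonoidHom.comp ι23 = ι23.comp Bab.toMonoidHom := by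
      apply Abelianization.hom_ext; apply FreeGroup.ext_hom
      intro j; fin_cases j <;>
        simp [B3, Bab, ι23, mul_assoc]
    have := DFunLike.congr_fun h w
    simpa using this
  intro u
  induction u using FreeGroup.induction_on with
  | C1 => simp
  | of x =>
    intro w
    fin_cases x
    · show (L3 (FreeGroup.of 0)) (ι23 w) = ι23 ((LAB (FreeGroup.of 0)) w)
      rw [L3_of0, show LAB (FreeGroup.of 0) = Aab from by simp [LAB]]
      exact hA w
    · show (L3 (FreeGroup.of 1)) (ι23 w) = ι23 ((LAB (FreeGroup.of 1)) w)
      rw [L3_of1, show LAB (FreeGroup.of 1) = Bab from by simp [LAB]]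
      exact hB w
  | inv_of x hx =>
    intro w
    rw [map_inv, map_inv]
    have := hx ((LAB (FreeGroup.of x))⁻¹ w)
    rw [aut_apply_inv_apply] at this
    rw [← this, aut_inv_apply_apply]
  | mul x y hx hy =>
    intro w
    rw [map_mul, map_mul, MulAut.mul_apply, MulAut.mul_apply, hy, hx]

/-- Centerlessness: an element of F2 commuting with both generators is trivial. -/
lemma centerless (z : F2) (h0 : z * FreeGroup.of 0 = FreeGroup.of 0 * z)
    (h1 : z * FreeGroup.of 1 = FreeGroup.of 1 * z) : z = 1 := by
  set C := L3 z with hC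
  have hCA : ∀ v, C (A3 v) = A3 (C v) := by
    intro v
    have h := congrArg L3 h0
    rw [map_mul, map_mul, L3_of0] at h
    have := DFunLike.congr_fun h v
    simpa [MulAut.mul_apply] using this
  have hCB : ∀ v, C (B3 v) = B3 (C v) := by
    intro v
    have h := congrArg L3 h1
    rw [map_mul, map_mul, L3_of1] at h
    have := DFunLike.congr_fun h v
    simpa [MulAut.mul_apply] using this
  -- images of basis vectors
  set u0 := C (ε3 0) with hu0d
  set u1 := C (ε3 1) with hu1d
  set u2 := C (ε3 2) with hu2d
  have hA0 : A3 (ε3 0) = ε3 0 := by simp [A3, ε3]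
  have hA1 : A3 (ε3 1) = ε3 1 * (ε3 0 * ε3 0) := by simp [A3, ε3, mul_assoc]
  have hA2 : A3 (ε3 2) = ε3 2 * ε3 1 := by simp [A3, ε3]
  have hB0 : B3 (ε3 0) = ε3 0 * (ε3 1 * ε3 1) := by simp [B3, ε3, mul_assoc]
  have hB1 : B3 (ε3 1) = ε3 1 := by simp [B3, ε3]
  have hB2 : B3 (ε3 2) = ε3 2 * ε3 0 := by simp [B3, ε3]
  -- the commutation equations
  have e1 : u0 = A3 u0 := by
    have := hCA (ε3 0); rwa [hA0] at this
  have e2 : u1 * (u0 * u0) = A3 u1 := by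
    have := hCA (ε3 1); rwa [hA1, map_mul, map_mul] at this
  have e3 : u2 * u1 = A3 u2 := by
    have := hCA (ε3 2); rwa [hA2, map_mul] at this
  have e4 : u0 * (u1 * u1) = B3 u0 := by
    have := hCB (ε3 0); rwa [hB0, map_mul, map_mul] at this
  have e6 : u2 * u0 = B3 u2 := by
    have := hCB (ε3 2); rwa [hB2, map_mul] at this
  -- coordinates
  have q1 := congrArg d30 e1; rw [d30_A3] at q1
  have q2 := congrArg d31 e1; rw [d31_A3] at q2
  have q3 := congrArg d30 e2; rw [d30_A3] at q3; rw [d30_mul, d30_mul] at q3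
  have q4 := congrArg d31 e2; rw [d31_A3] at q4; rw [d31_mul, d31_mul] at q4
  have q5 := congrArg d30 e3; rw [d30_A3] at q5; rw [d30_mul] at q5
  have q6 := congrArg d31 e3; rw [d31_A3] at q6; rw [d31_mul] at q6
  have q7 := congrArg d30 e4; rw [d30_B3] at q7; rw [d30_mul, d30_mul] at q7
  have q8 := congrArg d31 e4; rw [d31_B3] at q8; rw [d31_mul, d31_mul] at q8
  have q9 := congrArg d30 e6; rw [d30_B3] at q9; rw [d30_mul] at q9
  have q10 := congrArg d31 e6; rw [d31_B3] at q10; rw [d31_mul] at q10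
  have q11 := congrArg d32 e2; rw [d32_A3] at q11; rw [d32_mul, d32_mul] at q11
  have q12 := congrArg d32 e6; rw [d32_B3] at q12; rw [d32_mul] at q12
  have q13 := congrArg d32 e3; rw [d32_A3] at q13; rw [d32_mul] at q13
  set p := d30 u0 with hp
  have z1 : d31 u0 = 0 := by omega
  have z2 : d32 u0 = 0 := by omega
  have z3 : d31 u1 = p := by omega
  have z4 : d30 u1 = 0 := by
    have q8' := q8; omega
  have z5 : d32 u1 = 0 := by omega
  have z6 : d30 u2 = 0 := by omega
  have z7 : d31 u2 = 0 := by omega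
  have z8 : d32 u2 = p := by omega
  -- C is the p-th power map
  have hu0 : u0 = ε3 0 ^ p := by
    rw [recon3 u0, ← hp, z1, z2]; simp
  have hu1 : u1 = ε3 1 ^ p := by
    rw [recon3 u1, z3, z4, z5]; simp
  have hu2 : u2 = ε3 2 ^ p := by
    rw [recon3 u2, z6, z7, z8]; simp
  have hCpow : ∀ v, C v = v ^ p := by
    intro v
    conv_lhs => rw [recon3 v]
    rw [map_mul, map_mul, map_zpow, map_zpow, map_zpow]
    rw [← hu0d, ← hu1d, ← hu2d, hu0, hu1, hu2]
    rw [← zpow_mul, ← zpow_mul, ← zpow_mul]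
    conv_rhs => rw [recon3 v]
    rw [mul_zpow, mul_zpow, ← zpow_mul, ← zpow_mul, ← zpow_mul]
    rw [Int.mul_comm p (d30 v), Int.mul_comm p (d31 v), Int.mul_comm p (d32 v)]
  -- p is ±1
  obtain ⟨v, hv⟩ := C.surjective (ε3 0)
  have hvp : p * d30 v = 1 := by
    have := congrArg d30 hv
    rw [hCpow v, d30_zpow] at this
    simpa using this
  have hpu : p = 1 ∨ p = -1 :=
    Int.isUnit_iff.mp (IsUnit.of_mul_eq_one (d30 v) hvp)
  -- p = -1 is impossible since L3 preserves the last coordinate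
  have hp1 : p = 1 := by
    rcases hpu with h | h
    · exact h
    · exfalso
      have := hK3 z (ε3 2)
      rw [← hC, hCpow (ε3 2), h] at this
      simp at this
  -- conclude LAB z = 1
  have hLAB : ∀ j : Fin 2, LAB z (ε2 j) = ε2 j := by
    intro j
    apply ι23_inj
    rw [← hQ3 z (ε2 j), ← hC, hCpow, hp1, zpow_one]
  have hLAB1 : LAB z = 1 := by
    apply MulEquiv.toMonoidHom_injective
    apply Abelianization.hom_ext
    apply FreeGroup.ext_hom
    intro j
    have := hLAB j
    fin_cases j <;> simpa [ε2] using (by simpa [ε2] using hLAB _)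
  have := LAB_inj (a₁ := z) (a₂ := 1) (by rw [hLAB1, map_one])
  exact this

/-! ### The construction inside `Aut(F_n)` -/

noncomputable def autF : F2 →* MulAut F2 := FreeGroup.lift ![aF, bF]

lemma abAut_autF (w : F2) : abAut (autF w) = LAB w := by
  have h : (abAut (G := F2)).comp autF = LAB := by
    apply FreeGroup.ext_hom; intro j; fin_cases j <;> simp [autF, LAB, Aab, Bab]
  exact DFunLike.congr_fun h w

section BigN

variable (n : ℕ) (hn : 2 ≤ n)

abbrev NN := ∀ _ : Fin (2 * (n - 2)), F2

noncomputable def φn : F2 →* MulAut (NN n) where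
  toFun w := MulEquiv.piCongrRight (fun _ => autF w)
  map_one' := by
    apply MulEquiv.toMonoidHom_injective; apply MonoidHom.ext; intro l
    funext k
    simp [MulEquiv.piCongrRight]
  map_mul' w w' := by
    apply MulEquiv.toMonoidHom_injective; apply MonoidHom.ext; intro l
    funext k
    simp [MulEquiv.piCongrRight, MulAut.mul_apply]
    rfl

@[simp] lemma φn_apply (w : F2) (l : NN n) (k : Fin (2 * (n - 2))) :
    (φn n w l) k = autF w (l k) := rfl

noncomputable def ιn : F2 →* FreeGroup (Fin n) := FreeGroup.map (Fin.castLE hn)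

noncomputable def gens (l : NN n) (w : F2) : Fin n → FreeGroup (Fin n) := fun i =>
  if h : (i : ℕ) < 2 then ιn n hn (autF w (.of ⟨i, h⟩))
  else (ιn n hn (l ⟨2*((i:ℕ)-2), by have := i.isLt; omega⟩))⁻¹ * .of i *
       ιn n hn (l ⟨2*((i:ℕ)-2)+1, by have := i.isLt; omega⟩)

noncomputable def EE (l : NN n) (w : F2) : FreeGroup (Fin n) →* FreeGroup (Fin n) :=
  FreeGroup.lift (gens n hn l w)

lemma EE_of_lt (l : NN n) (w : F2) (i : Fin n) (h : (i : ℕ) < 2) :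
    EE n hn l w (.of i) = ιn n hn (autF w (.of ⟨i, h⟩)) := by
  rw [EE, FreeGroup.lift_apply_of, gens, dif_pos h]

lemma EE_of_ge (l : NN n) (w : F2) (i : Fin n) (h : ¬ (i : ℕ) < 2) :
    EE n hn l w (.of i) =
      (ιn n hn (l ⟨2*((i:ℕ)-2), by have := i.isLt; omega⟩))⁻¹ * .of i *
       ιn n hn (l ⟨2*((i:ℕ)-2)+1, by have := i.isLt; omega⟩) := by
  rw [EE, FreeGroup.lift_apply_of, gens, dif_neg h]

lemma Eι_hom (l : NN n) (w : F2) :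
    (EE n hn l w).comp (ιn n hn) = (ιn n hn).comp (autF w).toMonoidHom := by
  apply FreeGroup.ext_hom; intro j
  have h2 : ((Fin.castLE hn j : Fin n) : ℕ) < 2 := by
    have := j.isLt; simpa using this
  have hio : ιn n hn (FreeGroup.of j) = FreeGroup.of (Fin.castLE hn j) := by
    rw [ιn, FreeGroup.map.of]
  simp only [MonoidHom.coe_comp, Function.comp_apply, MulEquiv.coe_toMonoidHom]
  rw [hio, EE_of_lt n hn l w _ h2]
  have hfin : (⟨((Fin.castLE hn j : Fin n) : ℕ), h2⟩ : Fin 2) = j := Fin.ext (by simp)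
  rw [hfin]

lemma Eιp (l : NN n) (w : F2) (u : F2) :
    EE n hn l w (ιn n hn u) = ιn n hn (autF w u) := by
  have := DFunLike.congr_fun (Eι_hom n hn l w) u
  simpa using this

lemma Emul (l l' : NN n) (w w' : F2) :
    (EE n hn l w).comp (EE n hn l' w') = EE n hn (l * φn n w l') (w * w') := by
  apply FreeGroup.ext_hom; intro i
  by_cases hi : (i : ℕ) < 2
  · simp only [MonoidHom.coe_comp, Function.comp_apply]
    rw [EE_of_lt n hn l' w' i hi, EE_of_lt n hn _ _ i hi, Eιp]
    congr 1
    rw [map_mul, MulAut.mul_apply]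
  · simp only [MonoidHom.coe_comp, Function.comp_apply]
    rw [EE_of_ge n hn l' w' i hi, EE_of_ge n hn _ _ i hi]
    rw [map_mul, map_mul, map_inv, Eιp, Eιp, EE_of_ge n hn l w i hi]
    simp only [Pi.mul_apply, φn_apply, map_mul, mul_inv_rev]
    group

lemma Eone : EE n hn 1 1 = MonoidHom.id (FreeGroup (Fin n)) := by
  apply FreeGroup.ext_hom; intro i
  by_cases hi : (i : ℕ) < 2
  · rw [EE_of_lt n hn 1 1 i hi, map_one, MulAut.one_apply]
    show ιn n hn (FreeGroup.of ⟨(i : ℕ), hi⟩) = FreeGroup.of i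
    rw [ιn, FreeGroup.map.of]
    exact congrArg FreeGroup.of (Fin.ext (by simp))
  · rw [EE_of_ge n hn 1 1 i hi]
    simp

abbrev SP := (NN n) ⋊[φn n] F2

lemma Emul_p (p q : SP n) :
    (EE n hn p.left p.right).comp (EE n hn q.left q.right)
      = EE n hn (p * q).left (p * q).right := by
  rw [Emul, SemidirectProduct.mul_left, SemidirectProduct.mul_right]

noncomputable def Ψ (p : SP n) : MulAut (FreeGroup (Fin n)) :=
  MonoidHom.toMulEquiv (EE n hn p.left p.right) (EE n hn (p⁻¹).left (p⁻¹).right)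
    (by rw [Emul_p, inv_mul_cancel]
        rw [show ((1 : SP n)).left = 1 from SemidirectProduct.one_left,
          show ((1 : SP n)).right = 1 from SemidirectProduct.one_right, Eone])
    (by rw [Emul_p, mul_inv_cancel]
        rw [show ((1 : SP n)).left = 1 from SemidirectProduct.one_left,
          show ((1 : SP n)).right = 1 from SemidirectProduct.one_right, Eone])

@[simp] lemma Ψ_apply (p : SP n) (x : FreeGroup (Fin n)) :
    Ψ n hn p x = EE n hn p.left p.right x := rfl

noncomputable def ΨHom : SP n →* MulAut (FreeGroup (Fin n)) where
  toFun := Ψ n hn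
  map_one' := by
    apply MulEquiv.ext; intro x
    rw [Ψ_apply, show ((1 : SP n)).left = 1 from SemidirectProduct.one_left,
      show ((1 : SP n)).right = 1 from SemidirectProduct.one_right, Eone]
    rfl
  map_mul' p q := by
    apply MulEquiv.ext; intro x
    rw [MulAut.mul_apply, Ψ_apply, Ψ_apply, Ψ_apply]
    exact (DFunLike.congr_fun (Emul_p n hn p q) x).symm

noncomputable def Ω : SP n →* Out (FreeGroup (Fin n)) :=
  (QuotientGroup.mk' _).comp (ΨHom n hn)

/-- the detector homomorphisms F_n → F_2 -/
noncomputable def σd (c : F2) : FreeGroup (Fin n) →* F2 :=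
  FreeGroup.lift (fun i : Fin n => if h : (i : ℕ) < 2 then .of ⟨i, h⟩ else c)

lemma σd_of_lt (c : F2) (i : Fin n) (h : (i : ℕ) < 2) :
    σd n c (.of i) = .of ⟨i, h⟩ := by rw [σd, FreeGroup.lift_apply_of, dif_pos h]

lemma σd_of_ge (c : F2) (i : Fin n) (h : ¬ (i : ℕ) < 2) :
    σd n c (.of i) = c := by rw [σd, FreeGroup.lift_apply_of, dif_neg h]

lemma σι (c : F2) (u : F2) : σd n c (ιn n hn u) = u := by
  have h : (σd n c).comp (ιn n hn) = MonoidHom.id F2 := by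
    apply FreeGroup.ext_hom; intro j
    have h2 : ((Fin.castLE hn j : Fin n) : ℕ) < 2 := by
      have := j.isLt; simpa using this
    have hio : ιn n hn (FreeGroup.of j) = FreeGroup.of (Fin.castLE hn j) := by
      rw [ιn, FreeGroup.map.of]
    simp only [MonoidHom.coe_comp, Function.comp_apply, MonoidHom.id_apply]
    rw [hio, σd_of_lt n _ _ h2]
    exact congrArg FreeGroup.of (Fin.ext (by simp))
  exact DFunLike.congr_fun h u

lemma Ω_inj : Function.Injective (Ω n hn) := by
  rw [← MonoidHom.ker_eq_bot_iff, eq_bot_iff]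
  intro p hp
  rw [MonoidHom.mem_ker] at hp
  have hp1 : ΨHom n hn p ∈ (MulAut.conj : FreeGroup (Fin n) →* MulAut (FreeGroup (Fin n))).range := by
    have hp2 : ((QuotientGroup.mk' ((MulAut.conj : FreeGroup (Fin n) →* MulAut (FreeGroup (Fin n))).range)) (ΨHom n hn p)) = 1 := hp
    rwa [QuotientGroup.mk'_apply, QuotientGroup.eq_one_iff] at hp2
  obtain ⟨g, hg⟩ := hp1
  have hE : ∀ x, g * x * g⁻¹ = EE n hn p.left p.right x := by
    intro x
    have := DFunLike.congr_fun hg x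
    rw [MulAut.conj_apply] at this
    exact this
  -- Step 1: the right component is trivial
  have hwj : ∀ j : Fin 2, autF p.right (.of j)
      = (σd n 1 g) * .of j * (σd n 1 g)⁻¹ := by
    intro j
    have h1 := hE (ιn n hn (.of j))
    rw [Eιp] at h1
    have h2 := congrArg (σd n 1) h1
    simpa [map_mul, map_inv, σι n hn] using h2.symm
  have hEq : autF p.right = MulAut.conj (σd n 1 g) := by
    apply MulEquiv.toMonoidHom_injective
    apply FreeGroup.ext_hom
    intro j
    simpa [MulAut.conj_apply] using hwj j
  have hLAB1 : LAB p.right = 1 := by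
    rw [← abAut_autF, hEq, abAut_conj]
  have hw : p.right = 1 := LAB_inj (by rw [hLAB1, map_one])
  -- Step 2: g commutes with the first two generators
  have hgcomm : ∀ j : Fin 2, g * ιn n hn (.of j) = ιn n hn (.of j) * g := by
    intro j
    have h1 := hE (ιn n hn (.of j))
    rw [Eιp, hw, map_one, MulAut.one_apply] at h1
    calc g * ιn n hn (.of j) = (g * ιn n hn (.of j) * g⁻¹) * g := by group
    _ = ιn n hn (.of j) * g := by rw [h1]
  -- Step 3: the left component is trivial
  have hl : ∀ k : Fin (2 * (n - 2)), p.left k = 1 := by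
    intro k
    have hkl := k.isLt
    have hivn : 2 + (k : ℕ)/2 < n := by omega
    set i : Fin n := ⟨2 + (k : ℕ)/2, hivn⟩ with hidef
    have hige : ¬ (i : ℕ) < 2 := by show ¬ (2 + (k:ℕ)/2 < 2); omega
    set kL : Fin (2 * (n - 2)) := ⟨2*((i:ℕ)-2), by have := i.isLt; omega⟩ with hkL
    set kR : Fin (2 * (n - 2)) := ⟨2*((i:ℕ)-2)+1, by have := i.isLt; omega⟩ with hkR
    have hEi := hE (.of i)
    rw [hw, EE_of_ge n hn p.left 1 i hige] at hEi
    have key : ∀ c : F2, (σd n c g) * c * (σd n c g)⁻¹ = (p.left kL)⁻¹ * c * (p.left kR) := by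
      intro c
      have h2 := congrArg (σd n c) hEi
      rw [map_mul, map_mul, map_mul, map_mul, map_inv, map_inv, σι n hn, σι n hn,
        σd_of_ge n c i hige] at h2
      exact h2
    have hcz : ∀ c : F2, σd n c g = 1 := by
      intro c
      apply centerless
      · have := congrArg (σd n c) (hgcomm 0)
        rw [map_mul, map_mul, σι n hn] at this
        exact this
      · have := congrArg (σd n c) (hgcomm 1)
        rw [map_mul, map_mul, σι n hn] at this
        exact this
    have key' : ∀ c : F2, c = (p.left kL)⁻¹ * c * (p.left kR) := by
      intro c
      have := key c
      rw [hcz c] at this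
      simpa using this
    have hLR : p.left kL = p.left kR := by
      have := key' 1
      rw [mul_one] at this
      have : p.left kL * 1 = p.left kL * ((p.left kL)⁻¹ * p.left kR) := by rw [← this]
      rw [mul_one, ← mul_assoc, mul_inv_cancel, one_mul] at this
      exact this
    have hML : p.left kL = 1 := by
      apply centerless
      · have := key' (.of 0)
        rw [← hLR] at this
        calc p.left kL * FreeGroup.of 0
            = p.left kL * ((p.left kL)⁻¹ * FreeGroup.of 0 * p.left kL) := by rw [← this]
        _ = FreeGroup.of 0 * p.left kL := by group
      · have := key' (.of 1)
        rw [← hLR] at this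
        calc p.left kL * FreeGroup.of 1
            = p.left kL * ((p.left kL)⁻¹ * FreeGroup.of 1 * p.left kL) := by rw [← this]
        _ = FreeGroup.of 1 * p.left kL := by group
    have hMR : p.left kR = 1 := by rw [← hLR]; exact hML
    have hk : k = kL ∨ k = kR := by
      have h1 : (k : ℕ) = 2*((i:ℕ)-2) ∨ (k : ℕ) = 2*((i:ℕ)-2)+1 := by
        simp only [hidef]
        omega
      rcases h1 with h1 | h1
      · exact Or.inl (Fin.ext (by rw [h1, hkL]))
      · exact Or.inr (Fin.ext (by rw [h1, hkR]))
    rcases hk with h | h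
    · rw [h]; exact hML
    · rw [h]; exact hMR
  rw [Subgroup.mem_bot]
  apply SemidirectProduct.ext
  · rw [show ((1 : SP n)).left = 1 from SemidirectProduct.one_left]
    funext k
    exact hl k
  · rw [show ((1 : SP n)).right = 1 from SemidirectProduct.one_right]
    exact hw

end BigN

end Stmt6Proof


/-- For every `n ≥ 2`, the group `Out(F_n)` contains a subgroup
isomorphic to a semidirect product `F_2^{2(n-2)} ⋊ F_2` (for a suitable action of
`F_2` on the direct product of `2(n-2)` copies of `F_2`), namely the image of the
group of automorphisms `Φ(x_1)=α(x_1), Φ(x_2)=α(x_2), Φ(x_j)=l_j x_j r_j⁻¹` with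
`α` in a rank-2 free subgroup `U ≤ Aut(F(x_1,x_2))` lifting a free subgroup of
`Out(F_2)` and `l_j, r_j ∈ F(x_1,x_2)`. -/
theorem stmt6 (n : ℕ) (hn : 2 ≤ n) :
    ∃ (φ : FreeGroup (Fin 2) →* MulAut (∀ _ : Fin (2 * (n - 2)), FreeGroup (Fin 2)))
      (H : Subgroup (Out (FreeGroup (Fin n)))),
      Nonempty
        (((∀ _ : Fin (2 * (n - 2)), FreeGroup (Fin 2)) ⋊[φ] FreeGroup (Fin 2)) ≃* H) := by
  exact ⟨Stmt6Proof.φn n, (Stmt6Proof.Ω n hn).range,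
    ⟨MonoidHom.ofInjective (Stmt6Proof.Ω_inj n hn)⟩⟩
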